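/- Let n be a positive integer, let S be an n×n matrix with real entries (regarded as a complex matrix) satisfying Sᵀ = S and S·S = 1, and let H be an n×n complex Hermitian matrix whose entrywise complex conjugate satisfies conj(H) = S·H·S. Then there exists an orthonormal basis (φ₁,…,φₙ) of ℂⁿ consisting of eigenvectors of H such that for every index i there is a complex number pᵢ with |pᵢ| = 1 and φᵢ = pᵢ • (S · conj(φᵢ)). -/

import Mathlib

open Matrix

theorem stmt0 (n : ℕ) (hn : 0 < n) (S H : Matrix (Fin n) (Fin n) ℂ)
    (hSreal : ∀ i j, (S i j).im = 0)
    (hSsymm : Sᵀ = S) (hSsq : S * S = 1)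
    (hH : H.IsHermitian)
    (hHconj : H.map (starRingEnd ℂ) = S * H * S) :
    ∃ φ : Fin n → (Fin n → ℂ),
      (∀ i j, star (φ i) ⬝ᵥ φ j = if i = j then 1 else 0) ∧
      LinearIndependent ℂ φ ∧
      Submodule.span ℂ (Set.range φ) = ⊤ ∧
      ∀ i, (∃ μ : ℂ, H.mulVec (φ i) = μ • φ i) ∧
        ∃ p : ℂ, ‖p‖ = 1 ∧ φ i = p • S.mulVec (star (φ i)) := by
  classical
  have hSentry : ∀ i j, (starRingEnd ℂ) (S i j) = S i j := fun i j =>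
    Complex.conj_eq_iff_im.mpr (hSreal i j)
  set a : ℂ := (1 + Complex.I) / 2 with ha
  set b : ℂ := (1 - Complex.I) / 2 with hb
  have hconj2 : (starRingEnd ℂ) 2 = 2 := by
    apply Complex.ext <;> simp
  have hca : (starRingEnd ℂ) a = b := by
    rw [ha, hb, map_div₀, hconj2]
    congr 1
    simp [Complex.conj_I, sub_eq_add_neg]
  have hcb : (starRingEnd ℂ) b = a := by
    rw [ha, hb, map_div₀, hconj2]
    congr 1
    simp [Complex.conj_I, sub_eq_add_neg]
  set U : Matrix (Fin n) (Fin n) ℂ := a • 1 + b • S with hUdef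
  -- conjugation of combinations x•1 + y•S
  have hmapcomb : ∀ x y : ℂ,
      ((x • (1 : Matrix (Fin n) (Fin n) ℂ) + y • S).map (starRingEnd ℂ))
        = (starRingEnd ℂ) x • 1 + (starRingEnd ℂ) y • S := by
    intro x y
    ext i j
    simp [Matrix.map_apply, Matrix.one_apply, apply_ite, hSentry i j]
  have hUconj : U.map (starRingEnd ℂ) = b • 1 + a • S := by
    rw [hUdef, hmapcomb, hca, hcb]
  have hUt : Uᵀ = U := by
    rw [hUdef, transpose_add, transpose_smul, transpose_smul, transpose_one, hSsymm]
  have hUh : Uᴴ = b • 1 + a • S := by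
    ext i j
    rw [conjTranspose_apply]
    have h1 := congrFun (congrFun hUt j) i
    simp only [transpose_apply] at h1
    rw [← h1]
    have h2 := congrFun (congrFun hUconj i) j
    simpa [Matrix.map_apply, Complex.star_def] using h2
  have hab : b * a + a * b = 1 := by
    rw [ha, hb]
    linear_combination (-(1:ℂ)/2) * Complex.I_sq
  have haabb : b * b + a * a = 0 := by
    rw [ha, hb]
    linear_combination ((1:ℂ)/2) * Complex.I_sq
  have hcomb_mul : ∀ x y z w : ℂ,
      (x • (1 : Matrix (Fin n) (Fin n) ℂ) + y • S) * (z • 1 + w • S)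
        = (x * z + y * w) • 1 + (x * w + y * z) • S := by
    intro x y z w
    simp only [add_mul, mul_add, smul_mul_assoc, mul_smul_comm, smul_smul,
      one_mul, mul_one, hSsq]
    module
  have hUhU : Uᴴ * U = 1 := by
    rw [hUh, hUdef, hcomb_mul]
    rw [show b * a + a * b = 1 from hab, show b * b + a * a = 0 from haabb]
    simp
  have hUUh : U * Uᴴ = 1 := mul_eq_one_comm.mp hUhU
  have hSUc : S * U.map (starRingEnd ℂ) = U := by
    rw [hUconj, mul_add, mul_smul_comm, mul_smul_comm, mul_one, hSsq, hUdef]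
    abel
  have hUS : U * S = Uᴴ := by
    rw [hUdef, add_mul, smul_mul_assoc, smul_mul_assoc, one_mul, hSsq, hUh]
    abel
  have hUhconj : Uᴴ.map (starRingEnd ℂ) = U := by
    rw [hUh, hmapcomb, hcb, hca]
  -- the transformed matrix K
  set K : Matrix (Fin n) (Fin n) ℂ := Uᴴ * H * U with hKdef
  have hKconj : K.map (starRingEnd ℂ) = K := by
    rw [hKdef, Matrix.map_mul, Matrix.map_mul, hUhconj, hHconj]
    simp only [← mul_assoc]
    rw [hUS, mul_assoc, hSUc]
  have hKherm : K.IsHermitian := by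
    have : Kᴴ = K := by
      rw [hKdef, conjTranspose_mul, conjTranspose_mul, conjTranspose_conjTranspose,
        hH.eq, mul_assoc]
    exact this
  have hKentryim : ∀ i j, (K i j).im = 0 := by
    intro i j
    have := congrFun (congrFun hKconj i) j
    simpa [Matrix.map_apply, Complex.conj_eq_iff_im] using this
  set Kr : Matrix (Fin n) (Fin n) ℝ := Matrix.of (fun i j => (K i j).re) with hKrdef
  have hKentry : ∀ i j, K i j = ((Kr i j : ℝ) : ℂ) := by
    intro i j
    exact Complex.ext (by simp [hKrdef]) (by simp [hKrdef, hKentryim i j])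
  have hKrherm : Kr.IsHermitian := by
    have h := hKherm
    rw [Matrix.IsHermitian] at h ⊢
    ext i j
    have := congrFun (congrFun h i) j
    simp only [conjTranspose_apply] at this ⊢
    have hre : (K j i).re = (K i j).re := by
      rw [← this]; simp
    simpa [hKrdef] using hre
  -- real spectral theorem
  set ψ : Fin n → (Fin n → ℝ) := fun i => (hKrherm.eigenvectorBasis i : EuclideanSpace ℝ (Fin n))
    with hψdef
  set c : (Fin n → ℝ) → (Fin n → ℂ) := fun v k => ((v k : ℝ) : ℂ) with hcdef
  have hstarc : ∀ v, star (c v) = c v := by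
    intro v; funext k; simp [hcdef]
  set φ : Fin n → (Fin n → ℂ) := fun i => U *ᵥ c (ψ i) with hφdef
  have hKc : ∀ v, K *ᵥ c v = c (Kr *ᵥ v) := by
    intro v; funext i
    simp only [Matrix.mulVec, dotProduct, hcdef, hKentry]
    push_cast
    rfl
  have hstarφ : ∀ i, star (φ i) = (U.map (starRingEnd ℂ)) *ᵥ c (ψ i) := by
    intro i
    funext k
    simp only [hφdef, Pi.star_apply, Matrix.mulVec, dotProduct, Matrix.map_apply]
    rw [show star (∑ j, U k j * c (ψ i) j) = ∑ j, star (U k j * c (ψ i) j) from star_sum _ _]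
    refine Finset.sum_congr rfl fun j _ => ?_
    simp [hcdef, Complex.star_def, _root_.map_mul, Complex.conj_ofReal]
  -- orthonormality
  have hdot : ∀ i j, star (φ i) ⬝ᵥ φ j = if i = j then 1 else 0 := by
    intro i j
    have h1 : star (φ i) ⬝ᵥ φ j = star (c (ψ i)) ⬝ᵥ ((Uᴴ * U) *ᵥ c (ψ j)) := by
      simp only [hφdef, star_mulVec, ← Matrix.dotProduct_mulVec, Matrix.mulVec_mulVec,
        hstarc]
    rw [h1, hUhU, Matrix.one_mulVec, hstarc]
    have h2 : c (ψ i) ⬝ᵥ c (ψ j) = (((ψ i ⬝ᵥ ψ j : ℝ)) : ℂ) := by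
      simp only [dotProduct, hcdef]
      push_cast
      rfl
    rw [h2]
    have h3 : (ψ i) ⬝ᵥ (ψ j) = if i = j then 1 else 0 := by
      have := orthonormal_iff_ite.mp hKrherm.eigenvectorBasis.orthonormal i j
      simpa [PiLp.inner_apply, dotProduct, hψdef, mul_comm] using this
    rw [h3]
    split_ifs <;> simp
  have hli : LinearIndependent ℂ φ := by
    rw [Fintype.linearIndependent_iff]
    intro g hg j
    have := congrArg (fun v => star (φ j) ⬝ᵥ v) hg
    simp only [dotProduct_zero] at this
    rw [show star (φ j) ⬝ᵥ (∑ i, g i • φ i) = ∑ i, g i * (star (φ j) ⬝ᵥ φ i) from by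
      simp [dotProduct, Finset.mul_sum]
      rw [Finset.sum_comm]
      refine Finset.sum_congr rfl fun i _ => Finset.sum_congr rfl fun k _ => by ring] at this
    simp only [hdot] at this
    simpa [Finset.sum_ite_eq] using this
  have hspan : Submodule.span ℂ (Set.range φ) = ⊤ := by
    have : Nonempty (Fin n) := ⟨⟨0, hn⟩⟩
    apply hli.span_eq_top_of_card_eq_finrank
    simp
  refine ⟨φ, hdot, hli, hspan, fun i => ⟨⟨(hKrherm.eigenvalues i : ℂ), ?_⟩, 1, by simp, ?_⟩⟩
  · -- eigenvector property
    have hHU : H * U = U * K := by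
      rw [hKdef, ← mul_assoc, ← mul_assoc, hUUh, one_mul]
    have heig : Kr *ᵥ ψ i = hKrherm.eigenvalues i • ψ i := hKrherm.mulVec_eigenvectorBasis i
    have hcs : c (hKrherm.eigenvalues i • ψ i) = (hKrherm.eigenvalues i : ℂ) • c (ψ i) := by
      funext k; simp [hcdef]
    rw [hφdef]
    rw [Matrix.mulVec_mulVec, hHU, ← Matrix.mulVec_mulVec, hKc, heig, hcs,
      Matrix.mulVec_smul]
  · -- self-conjugacy with phase 1
    rw [one_smul, hstarφ, Matrix.mulVec_mulVec, hSUc, hφdef]
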